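/- If E is a phase observable that commutes with the number observable (P_n E(X) = E(X) P_n for all n and Borel X ⊆ [0,2π)), then E(X) = (ℓ(X)/(2π))·I for all X. Consequently, the number observable and any nontrivial phase observable are noncoexistent. -/

import Mathlib

open MeasureTheory Complex

/-- `phaseInt X n m = (1/2π) ∫_X e^{i(n-m)x} dx`. -/
noncomputable def phaseInt (X : Set ℝ) (n m : ℕ) : ℂ :=
  ((1 / (2 * Real.pi) : ℝ) : ℂ) *
    ∫ x in X, Complex.exp (Complex.I * ((n : ℂ) - (m : ℂ)) * (x : ℂ))

lemma vec_ext {H : Type*} [NormedAddCommGroup H] [InnerProductSpace ℂ H] [CompleteSpace H]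
    (e : HilbertBasis ℕ ℂ H) {v w : H}
    (h : ∀ n, (inner ℂ (e n) v : ℂ) = inner ℂ (e n) w) : v = w := by
  apply e.repr.injective
  apply lp.ext
  funext n
  rw [e.repr_apply_apply, e.repr_apply_apply, h]

/-- If a phase observable `E` commutes with the number observable
(`P_n E(X) = E(X) P_n` for all `n` and Borel `X ⊆ [0,2π)`), then `E` is the trivial phase:
`E(X) = (ℓ(X)/2π)·I`. Hence number and any nontrivial phase are noncoexistent. -/
theorem stmt14 {H : Type*} [NormedAddCommGroup H] [InnerProductSpace ℂ H] [CompleteSpace H]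
    (e : HilbertBasis ℕ ℂ H) (ξ : ℕ → H) (hξ : ∀ n, ‖ξ n‖ = 1)
    (c : ℕ → ℕ → ℂ) (hc : ∀ n m, c n m = (inner ℂ (ξ n) (ξ m) : ℂ))
    (E : Set ℝ → (H →L[ℂ] H))
    (hE : ∀ X : Set ℝ, MeasurableSet X → X ⊆ Set.Ico 0 (2 * Real.pi) → ∀ n m : ℕ,
      (inner ℂ (e n) (E X (e m)) : ℂ) = c n m * phaseInt X n m)
    (hcomm : ∀ (n : ℕ) (X : Set ℝ), MeasurableSet X → X ⊆ Set.Ico 0 (2 * Real.pi) →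
      ∀ φ : H,
      (inner ℂ (e n) (E X φ) : ℂ) • (e n : H) = E X ((inner ℂ (e n) φ : ℂ) • (e n : H))) :
    ∀ X : Set ℝ, MeasurableSet X → X ⊆ Set.Ico 0 (2 * Real.pi) →
      E X = (((volume X).toReal / (2 * Real.pi) : ℝ) : ℂ) • (1 : H →L[ℂ] H) := by
  intro X hX hXsub
  have hen : ∀ n : ℕ, (e n : H) ≠ 0 := fun n => by
    have := e.orthonormal.1 n
    intro h0; rw [h0, norm_zero] at this; norm_num at this
  ext φ
  apply vec_ext e
  intro n
  -- compute inner ℂ (e n) (E X φ)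
  have key : ∀ m : ℕ, (inner ℂ (e n) (E X (e m)) : ℂ) =
      (((volume X).toReal / (2 * Real.pi) : ℝ) : ℂ) * (if n = m then 1 else 0) := by
    intro m
    by_cases hnm : n = m
    · subst hnm
      rw [hE X hX hXsub n n]
      have hc1 : c n n = 1 := by
        rw [hc]
        rw [inner_self_eq_norm_sq_to_K, hξ]
        norm_num
      rw [hc1, one_mul, if_pos rfl, mul_one]
      unfold phaseInt
      simp only [sub_self, mul_zero, zero_mul, Complex.exp_zero]
      rw [integral_const, measureReal_restrict_apply_univ, measureReal_def, real_smul]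
      push_cast
      ring
    · have h := hcomm n X hX hXsub (e m)
      rw [orthonormal_iff_ite.mp e.orthonormal, if_neg hnm, zero_smul, map_zero] at h
      rcases smul_eq_zero.mp h with h' | h'
      · rw [h', if_neg hnm, mul_zero]
      · exact absurd h' (hen n)
  -- take inner with e n in hcomm applied to φ
  have h := congrArg (fun v => (inner ℂ (e n) v : ℂ)) (hcomm n X hX hXsub φ)
  simp only [inner_smul_right] at h
  rw [(E X).map_smul, inner_smul_right, key n, if_pos rfl, mul_one,
    orthonormal_iff_ite.mp e.orthonormal, if_pos rfl, mul_one] at h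
  rw [h]
  simp only [ContinuousLinearMap.smul_apply, ContinuousLinearMap.one_apply, inner_smul_right]
  ring
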